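/- Let A₁ ∈ ℝ^{m×m} and A₂ ∈ ℝ^{n×n} be symmetric, and H₁ ∈ ℝ^{m×m}, H₂ ∈ ℝ^{n×n} be symmetric positive definite diagonal. If H₁A₁ + (H₁A₁)ᵀ ⪯ 0 and H₂A₂ + (H₂A₂)ᵀ ⪯ 0, then for the Kronecker-product operator L = A₁ ⊗ I_n + I_m ⊗ A₂ and H = H₁ ⊗ H₂, we have HL + (HL)ᵀ ⪯ 0. -/

import Mathlib

open Matrix Kronecker

lemma psd_kron {m n : ℕ} {A : Matrix (Fin m) (Fin m) ℝ} {B : Matrix (Fin n) (Fin n) ℝ}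
    (hA : A.PosSemidef) (hB : B.PosSemidef) : (A ⊗ₖ B).PosSemidef := by
  exact hA.kronecker hB

lemma neg_kron {m n : ℕ} (A : Matrix (Fin m) (Fin m) ℝ) (B : Matrix (Fin n) (Fin n) ℝ) :
    (-A) ⊗ₖ B = -(A ⊗ₖ B) := by
  ext ⟨i, j⟩ ⟨k, l⟩
  simp [Matrix.kroneckerMap]

lemma kron_neg {m n : ℕ} (A : Matrix (Fin m) (Fin m) ℝ) (B : Matrix (Fin n) (Fin n) ℝ) :
    A ⊗ₖ (-B) = -(A ⊗ₖ B) := by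
  ext ⟨i, j⟩ ⟨k, l⟩
  simp [Matrix.kroneckerMap]

theorem stmt_19 (m n : ℕ)
    (A₁ H₁ : Matrix (Fin m) (Fin m) ℝ) (A₂ H₂ : Matrix (Fin n) (Fin n) ℝ)
    (hA₁ : A₁.IsSymm) (hA₂ : A₂.IsSymm)
    (hH₁sym : H₁.IsSymm) (hH₁pd : H₁.PosDef) (hH₁d : H₁.IsDiag)
    (hH₂sym : H₂.IsSymm) (hH₂pd : H₂.PosDef) (hH₂d : H₂.IsDiag)
    (h₁ : (-(H₁ * A₁ + (H₁ * A₁)ᵀ)).PosSemidef)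
    (h₂ : (-(H₂ * A₂ + (H₂ * A₂)ᵀ)).PosSemidef)
    (L H : Matrix (Fin m × Fin n) (Fin m × Fin n) ℝ)
    (hL : L = A₁ ⊗ₖ (1 : Matrix (Fin n) (Fin n) ℝ) +
      (1 : Matrix (Fin m) (Fin m) ℝ) ⊗ₖ A₂)
    (hH : H = H₁ ⊗ₖ H₂) :
    (-(H * L + (H * L)ᵀ)).PosSemidef := by
  subst hL hH
  have key : -((H₁ ⊗ₖ H₂) * (A₁ ⊗ₖ 1 + 1 ⊗ₖ A₂) +
      ((H₁ ⊗ₖ H₂) * (A₁ ⊗ₖ 1 + 1 ⊗ₖ A₂))ᵀ) =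
      (-(H₁ * A₁ + (H₁ * A₁)ᵀ)) ⊗ₖ H₂ + H₁ ⊗ₖ (-(H₂ * A₂ + (H₂ * A₂)ᵀ)) := by
    rw [Matrix.mul_add, ← Matrix.mul_kronecker_mul, ← Matrix.mul_kronecker_mul]
    simp only [Matrix.mul_one, Matrix.one_mul]
    rw [Matrix.transpose_add, ← Matrix.kroneckerMap_transpose, ← Matrix.kroneckerMap_transpose,
      hH₁sym.eq, hH₂sym.eq]
    simp only [neg_kron, kron_neg, Matrix.add_kronecker, Matrix.kronecker_add]
    abel
  rw [key]
  exact (psd_kron h₁ hH₂pd.posSemidef).add (psd_kron hH₁pd.posSemidef h₂)
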